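/- Let t0 ≤ t1 < t2 ≤ T. If (x̃,ũ) and (x̌,ǔ) are feasible processes for (FP3) such that x̃(t) = 1 for all t ∈ [t1,t2], and x̌(t) = 1 − a(t − t1) for t ∈ [t1, ť] and x̌(t) = 1 + a(t − t2) for t ∈ (ť, t2], where ť := (t1+t2)/2, then J(x̌,ǔ)|_{[t1,t2]} − J(x̃,ũ)|_{[t1,t2]} = (1/λ)(a/λ − 1)·Δ(t1,t2); moreover Δ(t1,t2) > 0 and J(x̌,ǔ)|_{[t1,t2]} > J(x̃,ũ)|_{[t1,t2]}. -/

import Mathlib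

open MeasureTheory Set

noncomputable section

/-- A feasible process for problem (FP3): `x` is the (absolutely continuous) state
trajectory, represented as the indefinite integral of its a.e. derivative `-a*u`,
`u` is a measurable control with values in `[-1,1]` a.e., the initial condition is
`x t0 = x0`, and the bilateral state constraint `-1 ≤ x t ≤ 1` holds on `[t0,T]`. -/
def FP3Feasible (a t0 T x0 : ℝ) (x u : ℝ → ℝ) : Prop :=
  AEStronglyMeasurable u (volume.restrict (Icc t0 T)) ∧
  (∀ᵐ t ∂(volume.restrict (Icc t0 T)), u t ∈ Icc (-1 : ℝ) 1) ∧
  (∀ t ∈ Icc t0 T, x t = x0 + ∫ s in t0..t, -(a * u s)) ∧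
  (∀ t ∈ Icc t0 T, x t ∈ Icc (-1 : ℝ) 1)

/-- The cost functional of (FP3) on the interval `[t1,t2]`. -/
def FP3Cost (lam t1 t2 : ℝ) (x u : ℝ → ℝ) : ℝ :=
  ∫ t in t1..t2, -(Real.exp (-(lam * t)) * (x t + u t))

/-- `(x,u)` is a `W^{1,1}` local minimizer of (FP3). -/
def FP3LocalMin (a lam t0 T x0 : ℝ) (x u : ℝ → ℝ) : Prop :=
  FP3Feasible a t0 T x0 x u ∧
  ∃ δ > (0 : ℝ), ∀ y v, FP3Feasible a t0 T x0 y v →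
    (∫ t in t0..T, |(-(a * v t)) - (-(a * u t))|) ≤ δ →
    FP3Cost lam t0 T x u ≤ FP3Cost lam t0 T y v

/-- `(x,u)` is a `W^{1,1}` global minimizer of (FP3). -/
def FP3GlobalMin (a lam t0 T x0 : ℝ) (x u : ℝ → ℝ) : Prop :=
  FP3Feasible a t0 T x0 x u ∧
  ∀ y v, FP3Feasible a t0 T x0 y v → FP3Cost lam t0 T x u ≤ FP3Cost lam t0 T y v

/-- The function `Δ(t1,t2) = e^{-λ t1} - 2 e^{-λ (t1+t2)/2} + e^{-λ t2}`. -/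
def FP3Delta (lam t1 t2 : ℝ) : ℝ :=
  Real.exp (-(lam * t1)) - 2 * Real.exp (-(lam * (t1 + t2) / 2)) + Real.exp (-(lam * t2))

/-- The characteristic constant `ρ = (1/λ) ln (a/(a-λ))` of (FP3). -/
def FP3rho (a lam : ℝ) : ℝ := (1 / lam) * Real.log (a / (a - lam))

lemma fp3_ftc_exp (lam t d : ℝ) (h : t ≤ d) :
    Real.exp (-(lam * t)) = Real.exp (-(lam * d)) + ∫ s in Ioc t d, lam * Real.exp (-(lam * s)) := by
  have hd : ∀ s : ℝ, HasDerivAt (fun r => -Real.exp (-(lam * r))) (lam * Real.exp (-(lam * s))) s := by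
    intro s
    have h1 : HasDerivAt (fun r : ℝ => -(lam * r)) (-lam) s := by
      exact (((hasDerivAt_id' s).const_mul lam).neg).congr_deriv (by ring)
    have : HasDerivAt (fun r => -Real.exp (-(lam * r))) (-(Real.exp (-(lam * s)) * -lam)) s :=
      (h1.exp).neg
    convert this using 1
    ring
  have hint : IntervalIntegrable (fun s => lam * Real.exp (-(lam * s))) volume t d :=
    (Continuous.intervalIntegrable (by continuity) t d)
  have := intervalIntegral.integral_eq_sub_of_hasDerivAt (fun s _ => hd s) hint
  rw [intervalIntegral.integral_of_le h] at this
  rw [this]; ring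

lemma fp3_parts (lam c d : ℝ) (w : ℝ → ℝ)
    (hw : Integrable w (volume.restrict (Ioc c d))) :
    ∫ t in Ioc c d, Real.exp (-(lam * t)) * w t
      = Real.exp (-(lam * d)) * (∫ t in Ioc c d, w t)
        + lam * ∫ s in Ioc c d, Real.exp (-(lam * s)) * (∫ t in Ioc c s, w t) := by
  set μ := volume.restrict (Ioc c d) with hμ
  set e : ℝ → ℝ := fun t => Real.exp (-(lam * t)) with he
  have hecont : Continuous e := by continuity
  have heC : ∃ C, ∀ x ∈ Icc c d, ‖e x - e d‖ ≤ C :=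
    isCompact_Icc.exists_bound_of_continuousOn ((hecont.sub continuous_const).continuousOn)
  obtain ⟨C, hC⟩ := heC
  have haemem : ∀ᵐ t ∂μ, t ∈ Ioc c d := ae_restrict_mem measurableSet_Ioc
  have hg2 : Integrable (fun t => (e t - e d) * w t) μ := by
    refine hw.bdd_mul (c := C) ((hecont.sub continuous_const).aestronglyMeasurable) ?_
    filter_upwards [haemem] with t ht
    exact hC t (Ioc_subset_Icc_self ht)
  have hg1 : Integrable (fun t => e d * w t) μ := hw.const_mul _
  have step1 : ∫ t, e t * w t ∂μ
      = e d * (∫ t, w t ∂μ) + ∫ t, (e t - e d) * w t ∂μ := by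
    rw [← integral_const_mul, ← integral_add hg1 hg2]
    apply integral_congr_ae
    filter_upwards with t
    ring
  have hle : Integrable (fun s => lam * e s) μ :=
    ((by continuity : Continuous fun s => lam * e s)).integrableOn_Ioc
  set F : ℝ × ℝ → ℝ := fun p => w p.1 * (lam * e p.2) with hF
  set S : Set (ℝ × ℝ) := {p : ℝ × ℝ | p.1 < p.2} with hS
  have hSm : MeasurableSet S := measurableSet_lt measurable_fst measurable_snd
  have hFint : Integrable (S.indicator F) (μ.prod μ) :=
    (hw.mul_prod hle).indicator hSm
  have step2 : ∫ t, (e t - e d) * w t ∂μ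
      = ∫ t, ∫ s, S.indicator F (t, s) ∂μ ∂μ := by
    apply setIntegral_congr_fun measurableSet_Ioc
    intro t ht
    show (e t - e d) * w t = ∫ s, S.indicator F (t, s) ∂μ
    have h1 : e t - e d = ∫ s in Ioc t d, lam * e s := by
      have := fp3_ftc_exp lam t d ht.2
      simp only [he]; rw [this]; ring
    have h2 : ∫ s in Ioc t d, lam * e s = ∫ s, (Ioi t).indicator (fun s => lam * e s) s ∂μ := by
      rw [integral_indicator measurableSet_Ioi, hμ, Measure.restrict_restrict measurableSet_Ioi]
      congr 1
      rw [inter_comm, Ioc_inter_Ioi, sup_eq_right.mpr ht.1.le]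
    rw [h1, h2, ← integral_mul_const]
    apply integral_congr_ae
    filter_upwards with s
    by_cases hts : t < s
    · simp [Set.indicator, hS, hF, hts]; ring
    · simp [Set.indicator, hS, hF, hts]
  have step3 : ∫ t, ∫ s, S.indicator F (t, s) ∂μ ∂μ
      = ∫ s, ∫ t, S.indicator F (t, s) ∂μ ∂μ := by
    have : Integrable (Function.uncurry fun t s => S.indicator F (t, s)) (μ.prod μ) := by
      exact hFint
    exact integral_integral_swap this
  have step4 : ∫ s, ∫ t, S.indicator F (t, s) ∂μ ∂μ
      = ∫ s, lam * (e s * ∫ t in Ioc c s, w t) ∂μ := by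
    apply setIntegral_congr_fun measurableSet_Ioc
    intro s hs
    show (∫ t, S.indicator F (t, s) ∂μ) = lam * (e s * ∫ t in Ioc c s, w t)
    have h1 : (fun t => S.indicator F (t, s)) = (Iio s).indicator (fun t => w t * (lam * e s)) := by
      funext t
      by_cases hts : t < s
      · simp [Set.indicator, hS, hF, hts]
      · simp [Set.indicator, hS, hF, hts]
    rw [h1, integral_indicator measurableSet_Iio, hμ, Measure.restrict_restrict measurableSet_Iio]
    have h2 : Iio s ∩ Ioc c d = Ioo c s := by
      ext x
      simp only [mem_inter_iff, mem_Iio, mem_Ioc, mem_Ioo]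
      constructor
      · rintro ⟨h1', h2', _⟩; exact ⟨h2', h1'⟩
      · rintro ⟨h1', h2'⟩; exact ⟨h2', h1', le_trans h2'.le hs.2⟩
    rw [h2, integral_mul_const, ← integral_Ioc_eq_integral_Ioo]
    ring
  rw [step1, step2, step3, step4, integral_const_mul]

lemma fp3_antider (lam c d k : ℝ) (hl : lam ≠ 0) :
    ∫ t in c..d, Real.exp (-(lam * t)) * (t - k)
      = Real.exp (-(lam * d)) * (-(d - k)/lam - 1/lam^2)
        - Real.exp (-(lam * c)) * (-(c - k)/lam - 1/lam^2) := by
  have hd : ∀ t : ℝ, HasDerivAt (fun r => Real.exp (-(lam * r)) * (-(r - k)/lam - 1/lam^2))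
      (Real.exp (-(lam * t)) * (t - k)) t := by
    intro t
    have h1 : HasDerivAt (fun r : ℝ => -(lam * r)) (-lam) t := by
      exact (((hasDerivAt_id' t).const_mul lam).neg).congr_deriv (by ring)
    have he : HasDerivAt (fun r => Real.exp (-(lam * r))) (-lam * Real.exp (-(lam * t))) t := by
      simpa [mul_comm] using h1.exp
    have hg : HasDerivAt (fun r : ℝ => -(r - k)/lam - 1/lam^2) (-1/lam) t :=
      ((((hasDerivAt_id t).sub_const k).neg).div_const lam).sub_const (1/lam^2)
    have : HasDerivAt (fun r => Real.exp (-(lam * r)) * (-(r - k)/lam - 1/lam^2))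
        (-lam * Real.exp (-(lam * t)) * (-(t - k)/lam - 1/lam^2) + Real.exp (-(lam * t)) * (-1/lam)) t :=
      he.mul hg
    convert this using 1
    field_simp
    ring
  have hint : IntervalIntegrable (fun t => Real.exp (-(lam * t)) * (t - k)) volume c d :=
    (Continuous.intervalIntegrable (by continuity) c d)
  exact intervalIntegral.integral_eq_sub_of_hasDerivAt (fun t _ => hd t) hint

lemma fp3_int_u (t0 T : ℝ) (u : ℝ → ℝ)
    (hm : AEStronglyMeasurable u (volume.restrict (Icc t0 T)))
    (hb : ∀ᵐ t ∂(volume.restrict (Icc t0 T)), u t ∈ Icc (-1 : ℝ) 1) :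
    IntegrableOn u (Icc t0 T) := by
  refine Integrable.mono' (g := fun _ => (1 : ℝ)) (integrable_const 1) hm ?_
  filter_upwards [hb] with t ht
  rw [Real.norm_eq_abs, abs_le]
  exact ⟨ht.1, ht.2⟩

theorem fp3_lemma_technical1
    (a lam t0 T x0 : ℝ) (hal : lam < a) (hlam : 0 < lam)
    (ht0 : 0 ≤ t0) (htT : t0 < T) (hx0 : x0 ∈ Icc (-1 : ℝ) 1)
    (t1 t2 : ℝ) (h01 : t0 ≤ t1) (h12 : t1 < t2) (h2T : t2 ≤ T)
    (xt ut xc uc : ℝ → ℝ)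
    (hft : FP3Feasible a t0 T x0 xt ut) (hfc : FP3Feasible a t0 T x0 xc uc)
    (hxt : ∀ t ∈ Icc t1 t2, xt t = 1)
    (hxc1 : ∀ t ∈ Icc t1 ((t1 + t2) / 2), xc t = 1 - a * (t - t1))
    (hxc2 : ∀ t ∈ Ioc ((t1 + t2) / 2) t2, xc t = 1 + a * (t - t2)) :
    FP3Cost lam t1 t2 xc uc - FP3Cost lam t1 t2 xt ut
      = (1 / lam) * (a / lam - 1) * FP3Delta lam t1 t2 ∧
    0 < FP3Delta lam t1 t2 ∧
    FP3Cost lam t1 t2 xt ut < FP3Cost lam t1 t2 xc uc := by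
  obtain ⟨hmt, hbt, hxt_eq, hxtmem⟩ := hft
  obtain ⟨hmc, hbc, hxc_eq, hxcmem⟩ := hfc
  have ha : 0 < a := lt_trans hlam hal
  have hane : a ≠ 0 := ne_of_gt ha
  have hlne : lam ≠ 0 := ne_of_gt hlam
  set tm : ℝ := (t1 + t2) / 2 with htm
  have h1m : t1 < tm := by rw [htm]; linarith
  have hm2 : tm < t2 := by rw [htm]; linarith
  set q : ℝ → ℝ := fun t => if t ≤ tm then t - t1 else t2 - t with hq
  have hsub : Icc t1 t2 ⊆ Icc t0 T := Icc_subset_Icc h01 h2T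
  have hsub' : Ioc t1 t2 ⊆ Icc t0 T := fun x hx => hsub (Ioc_subset_Icc_self hx)
  -- integrability of controls
  have hut_T : IntegrableOn ut (Icc t0 T) := fp3_int_u t0 T ut hmt hbt
  have huc_T : IntegrableOn uc (Icc t0 T) := fp3_int_u t0 T uc hmc hbc
  have hut : IntegrableOn ut (Ioc t1 t2) := hut_T.mono_set hsub'
  have huc : IntegrableOn uc (Ioc t1 t2) := huc_T.mono_set hsub'
  have hw : Integrable (fun t => ut t - uc t) (volume.restrict (Ioc t1 t2)) := hut.sub huc
  -- primitive identity for feasible processes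
  have key : ∀ (x u : ℝ → ℝ), IntegrableOn u (Icc t0 T) →
      (∀ t ∈ Icc t0 T, x t = x0 + ∫ s in t0..t, -(a * u s)) →
      ∀ s ∈ Icc t1 t2, ∫ t in Ioc t1 s, u t = (x t1 - x s) / a := by
    intro x u hui hx s hs
    have hs' : s ∈ Icc t0 T := hsub hs
    have ht1' : t1 ∈ Icc t0 T := hsub ⟨le_refl t1, h12.le⟩
    have hint : ∀ b ∈ Icc t0 T, IntervalIntegrable (fun r => -(a * u r)) volume t0 b := by
      intro b hb
      apply IntegrableOn.intervalIntegrable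
      rw [uIcc_of_le hb.1]
      exact ((hui.mono_set (Icc_subset_Icc_right hb.2)).const_mul a).neg
    have hiu : IntervalIntegrable u volume t1 s := by
      apply IntegrableOn.intervalIntegrable
      rw [uIcc_of_le hs.1]
      exact hui.mono_set (Icc_subset_Icc (hsub ⟨le_refl _, h12.le⟩).1 hs'.2)
    have e3 : x s - x t1 = ∫ r in t1..s, -(a * u r) := by
      rw [hx s hs', hx t1 ht1',
        ← intervalIntegral.integral_interval_sub_left (hint s hs') (hint t1 ht1')]
      ring
    rw [intervalIntegral.integral_neg, intervalIntegral.integral_const_mul,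
      intervalIntegral.integral_of_le hs.1] at e3
    field_simp
    linarith
  -- the V identity
  have hVt : ∀ s ∈ Icc t1 t2, ∫ t in Ioc t1 s, (ut t - uc t) = (xc s - xt s) / a := by
    intro s hs
    have h1 := key xt ut hut_T hxt_eq s hs
    have h2 := key xc uc huc_T hxc_eq s hs
    have hss : Ioc t1 s ⊆ Icc t0 T := fun x hx =>
      hsub ⟨le_of_lt hx.1, le_trans hx.2 hs.2⟩
    have hxct1 : xc t1 = 1 := by rw [hxc1 t1 ⟨le_refl _, h1m.le⟩]; ring
    rw [integral_sub (hut_T.mono_set hss) (huc_T.mono_set hss), h1, h2,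
      hxt t1 ⟨le_refl _, h12.le⟩, hxct1]
    ring
  -- value of (xc - xt)/a on Ioc
  have hqval : ∀ s ∈ Ioc t1 t2, (xc s - xt s) / a = -(q s) := by
    intro s hs
    have hxts : xt s = 1 := hxt s (Ioc_subset_Icc_self hs)
    by_cases hstm : s ≤ tm
    · simp only [hq, if_pos hstm]
      rw [hxc1 s ⟨hs.1.le, hstm⟩, hxts]
      field_simp
      ring
    · simp only [hq, if_neg hstm]
      rw [hxc2 s ⟨lt_of_not_ge hstm, hs.2⟩, hxts]
      field_simp
      ring
  -- boundedness facts
  have hecont : Continuous (fun t : ℝ => Real.exp (-(lam * t))) :=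
    Real.continuous_exp.comp ((continuous_const.mul continuous_id).neg)
  obtain ⟨C, hC⟩ : ∃ C, ∀ x ∈ Icc t1 t2, ‖Real.exp (-(lam * x))‖ ≤ C :=
    isCompact_Icc.exists_bound_of_continuousOn hecont.continuousOn
  have haemem : ∀ᵐ t ∂(volume.restrict (Ioc t1 t2)), t ∈ Ioc t1 t2 :=
    ae_restrict_mem measurableSet_Ioc
  have hebd : ∀ᵐ t ∂(volume.restrict (Ioc t1 t2)), ‖Real.exp (-(lam * t))‖ ≤ C := by
    filter_upwards [haemem] with t ht
    exact hC t (Ioc_subset_Icc_self ht)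
  have hqmeas : Measurable q := by
    apply Measurable.ite (measurableSet_le measurable_id measurable_const)
    · exact measurable_id.sub measurable_const
    · exact measurable_const.sub measurable_id
  have hqint : Integrable q (volume.restrict (Ioc t1 t2)) := by
    refine Integrable.mono' (g := fun _ => t2 - t1) (integrable_const _)
      hqmeas.aestronglyMeasurable ?_
    filter_upwards [haemem] with t ht
    rw [Real.norm_eq_abs, abs_le]
    simp only [hq]
    split_ifs with h
    · constructor <;> [linarith [ht.1]; linarith [ht.2]]
    · constructor <;> [linarith [ht.2]; linarith [ht.1]]
  have heq_int : Integrable (fun t => Real.exp (-(lam * t)) * q t)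
      (volume.restrict (Ioc t1 t2)) :=
    hqint.bdd_mul (c := C) hecont.aestronglyMeasurable hebd
  have hB_int : Integrable (fun t => Real.exp (-(lam * t)) * (ut t - uc t))
      (volume.restrict (Ioc t1 t2)) :=
    hw.bdd_mul (c := C) hecont.aestronglyMeasurable hebd
  -- xc = 1 - a q on Ioc
  have hxc_val : ∀ t ∈ Ioc t1 t2, xc t = 1 - a * q t := by
    intro t ht
    by_cases h : t ≤ tm
    · simp only [hq, if_pos h]; exact hxc1 t ⟨ht.1.le, h⟩
    · simp only [hq, if_neg h]; rw [hxc2 t ⟨lt_of_not_ge h, ht.2⟩]; ring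
  -- integrability of the cost integrands
  have hft_int : Integrable (fun t => -(Real.exp (-(lam * t)) * (xt t + ut t)))
      (volume.restrict (Ioc t1 t2)) := by
    apply Integrable.neg
    have h0 : Integrable (fun t => (1 : ℝ) + ut t) (volume.restrict (Ioc t1 t2)) :=
      (integrable_const 1).add hut
    refine (h0.bdd_mul (c := C) hecont.aestronglyMeasurable hebd).congr ?_
    filter_upwards [haemem] with t ht
    rw [hxt t (Ioc_subset_Icc_self ht)]
  have hfc_int : Integrable (fun t => -(Real.exp (-(lam * t)) * (xc t + uc t)))
      (volume.restrict (Ioc t1 t2)) := by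
    apply Integrable.neg
    have h0 : Integrable (fun t => ((1 : ℝ) - a * q t) + uc t) (volume.restrict (Ioc t1 t2)) :=
      ((integrable_const 1).sub (hqint.const_mul a)).add huc
    refine (h0.bdd_mul (c := C) hecont.aestronglyMeasurable hebd).congr ?_
    filter_upwards [haemem] with t ht
    rw [hxc_val t ht]
  have hA_int : Integrable (fun t => Real.exp (-(lam * t)) * (xt t - xc t))
      (volume.restrict (Ioc t1 t2)) := by
    refine ((hqint.const_mul a).bdd_mul (c := C) hecont.aestronglyMeasurable hebd).congr ?_
    filter_upwards [haemem] with t ht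
    rw [hxc_val t ht, hxt t (Ioc_subset_Icc_self ht)]
    ring
  -- cost difference splits
  have hDsplit : FP3Cost lam t1 t2 xc uc - FP3Cost lam t1 t2 xt ut
      = (∫ t in Ioc t1 t2, Real.exp (-(lam * t)) * (xt t - xc t))
        + ∫ t in Ioc t1 t2, Real.exp (-(lam * t)) * (ut t - uc t) := by
    rw [FP3Cost, FP3Cost, intervalIntegral.integral_of_le h12.le,
      intervalIntegral.integral_of_le h12.le, ← integral_sub hfc_int hft_int,
      ← integral_add hA_int hB_int]
    apply integral_congr_ae
    filter_upwards with t
    ring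
  -- A term
  have hA_eq : ∫ t in Ioc t1 t2, Real.exp (-(lam * t)) * (xt t - xc t)
      = a * ∫ t in Ioc t1 t2, Real.exp (-(lam * t)) * q t := by
    rw [← integral_const_mul]
    apply setIntegral_congr_fun measurableSet_Ioc
    intro t ht
    show Real.exp (-(lam * t)) * (xt t - xc t) = a * (Real.exp (-(lam * t)) * q t)
    rw [hxc_val t ht, hxt t (Ioc_subset_Icc_self ht)]
    ring
  -- B term via integration by parts
  have hV0 : ∫ t in Ioc t1 t2, (ut t - uc t) = 0 := by
    rw [hVt t2 ⟨h12.le, le_refl _⟩]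
    have h2 : xc t2 = 1 := by rw [hxc2 t2 ⟨hm2, le_refl _⟩]; ring
    rw [h2, hxt t2 ⟨h12.le, le_refl _⟩]
    simp
  have hB_eq : ∫ t in Ioc t1 t2, Real.exp (-(lam * t)) * (ut t - uc t)
      = lam * -(∫ t in Ioc t1 t2, Real.exp (-(lam * t)) * q t) := by
    rw [fp3_parts lam t1 t2 (fun t => ut t - uc t) hw, hV0, mul_zero, zero_add]
    congr 1
    rw [← integral_neg]
    apply setIntegral_congr_fun measurableSet_Ioc
    intro s hs
    show Real.exp (-(lam * s)) * (∫ t in Ioc t1 s, (ut t - uc t))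
        = -(Real.exp (-(lam * s)) * q s)
    rw [hVt s (Ioc_subset_Icc_self hs), hqval s hs]
    ring
  -- compute Q
  have hQ1 : ∫ t in Ioc t1 tm, Real.exp (-(lam * t)) * q t
      = Real.exp (-(lam * tm)) * (-(tm - t1)/lam - 1/lam^2)
        - Real.exp (-(lam * t1)) * (-(t1 - t1)/lam - 1/lam^2) := by
    rw [← fp3_antider lam t1 tm t1 hlne, intervalIntegral.integral_of_le h1m.le]
    apply setIntegral_congr_fun measurableSet_Ioc
    intro t ht
    show Real.exp (-(lam * t)) * q t = Real.exp (-(lam * t)) * (t - t1)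
    simp only [hq, if_pos ht.2]
  have hQ2 : ∫ t in Ioc tm t2, Real.exp (-(lam * t)) * q t
      = -(Real.exp (-(lam * t2)) * (-(t2 - t2)/lam - 1/lam^2)
        - Real.exp (-(lam * tm)) * (-(tm - t2)/lam - 1/lam^2)) := by
    rw [← fp3_antider lam tm t2 t2 hlne, ← intervalIntegral.integral_neg,
      intervalIntegral.integral_of_le hm2.le]
    apply setIntegral_congr_fun measurableSet_Ioc
    intro t ht
    show Real.exp (-(lam * t)) * q t = -(Real.exp (-(lam * t)) * (t - t2))
    have : ¬ t ≤ tm := not_le.mpr ht.1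
    simp only [hq, if_neg this]
    ring
  have hQsplit : ∫ t in Ioc t1 t2, Real.exp (-(lam * t)) * q t
      = (∫ t in Ioc t1 tm, Real.exp (-(lam * t)) * q t)
        + ∫ t in Ioc tm t2, Real.exp (-(lam * t)) * q t := by
    rw [← Ioc_union_Ioc_eq_Ioc h1m.le hm2.le]
    exact setIntegral_union (Ioc_disjoint_Ioc_of_le le_rfl) measurableSet_Ioc
      (IntegrableOn.mono_set heq_int (Ioc_subset_Ioc_right hm2.le))
      (IntegrableOn.mono_set heq_int (Ioc_subset_Ioc_left h1m.le))
  have hQval : ∫ t in Ioc t1 t2, Real.exp (-(lam * t)) * q t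
      = FP3Delta lam t1 t2 / lam ^ 2 := by
    rw [hQsplit, hQ1, hQ2, FP3Delta]
    have harg : -(lam * tm) = -(lam * (t1 + t2) / 2) := by rw [htm]; ring
    rw [harg, htm]
    field_simp
    ring
  -- the three conclusions
  have hmain : FP3Cost lam t1 t2 xc uc - FP3Cost lam t1 t2 xt ut
      = (1 / lam) * (a / lam - 1) * FP3Delta lam t1 t2 := by
    rw [hDsplit, hA_eq, hB_eq, hQval]
    field_simp
    ring
  have hdelta : 0 < FP3Delta lam t1 t2 := by
    have hp : Real.exp (-(lam * t2) / 2) < Real.exp (-(lam * t1) / 2) := by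
      apply Real.exp_lt_exp.mpr
      nlinarith
    have heq : FP3Delta lam t1 t2
        = (Real.exp (-(lam * t1) / 2) - Real.exp (-(lam * t2) / 2)) ^ 2 := by
      rw [FP3Delta]
      have h1 : Real.exp (-(lam * t1)) = Real.exp (-(lam * t1) / 2) ^ 2 := by
        rw [sq, ← Real.exp_add]; congr 1; ring
      have h2 : Real.exp (-(lam * t2)) = Real.exp (-(lam * t2) / 2) ^ 2 := by
        rw [sq, ← Real.exp_add]; congr 1; ring
      have h3 : Real.exp (-(lam * (t1 + t2) / 2))
          = Real.exp (-(lam * t1) / 2) * Real.exp (-(lam * t2) / 2) := by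
        rw [← Real.exp_add]; congr 1; ring
      rw [h1, h2, h3]; ring
    rw [heq]
    exact pow_pos (sub_pos.mpr hp) 2
  refine ⟨hmain, hdelta, ?_⟩
  have hpos : 0 < (1 / lam) * (a / lam - 1) * FP3Delta lam t1 t2 := by
    apply mul_pos (mul_pos (by positivity) _) hdelta
    rw [sub_pos]
    exact (one_lt_div hlam).mpr hal
  linarith [hmain, hpos]
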